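/- Fix β>0 and consider Z^i_{0,−1,β}=(X^i_0,Y_{−1,β}) with X^i_0(x,y)=(1,−x) and Y_{−1,β}(x,y)=(−(y+β),−x). Then the origin is a Σ-center: for every x₀ with −β<x₀<0 there exist T₁=−2x₀>0, T₂=log((β−x₀)/(β+x₀))>0 and C¹ curves γ₁:[0,T₁]→ℝ², γ₂:[0,T₂]→ℝ², explicitly γ₁(t)=(x₀+t, −x₀t−t²/2) and γ₂(t)=(((β−x₀)e^{−t}−(β+x₀)e^{t})/2, −β+((β−x₀)e^{−t}+(β+x₀)e^{t})/2), such that: γ₁'(t)=X^i_0(γ₁(t)) and γ₂'(t)=Y_{−1,β}(γ₂(t)); γ₁(0)=(x₀,0), γ₁(T₁)=(−x₀,0)=γ₂(0), γ₂(T₂)=(x₀,0); the second coordinate of γ₁(t) is strictly positive for 0<t<T₁ and the second coordinate of γ₂(t) is strictly negative for 0<t<T₂. Hence the concatenation of γ₁ and γ₂ is a closed canard cycle of kind I through (x₀,0), and these cycles form a one-parameter family encircling the origin. -/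

import Mathlib

/-- Case 12₁ of Theorem 1: the origin is a Σ-center for Z^i_{0,-1,β}, β > 0.
For each x₀ ∈ (-β,0) explicit times T₁, T₂ > 0 and arcs γ₁ of X^i_0 (in y ≥ 0)
and γ₂ of Y_{-1,β} (in y ≤ 0) concatenate into a closed canard cycle of kind I
through (x₀,0). -/
theorem stmt_14 (β x₀ : ℝ) (hβ : 0 < β) (h1 : -β < x₀) (h2 : x₀ < 0) :
    let X : ℝ × ℝ → ℝ × ℝ := fun p => (1, -p.1)
    let Y : ℝ × ℝ → ℝ × ℝ := fun p => (-(p.2 + β), -p.1)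
    let T₁ : ℝ := -2 * x₀
    let T₂ : ℝ := Real.log ((β - x₀) / (β + x₀))
    let γ₁ : ℝ → ℝ × ℝ := fun t => (x₀ + t, -x₀ * t - t ^ 2 / 2)
    let γ₂ : ℝ → ℝ × ℝ := fun t =>
      (((β - x₀) * Real.exp (-t) - (β + x₀) * Real.exp t) / 2,
       -β + ((β - x₀) * Real.exp (-t) + (β + x₀) * Real.exp t) / 2)
    0 < T₁ ∧ 0 < T₂ ∧
    (∀ t : ℝ, HasDerivAt γ₁ (X (γ₁ t)) t) ∧
    (∀ t : ℝ, HasDerivAt γ₂ (Y (γ₂ t)) t) ∧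
    γ₁ 0 = (x₀, 0) ∧ γ₁ T₁ = (-x₀, 0) ∧
    γ₂ 0 = (-x₀, 0) ∧ γ₂ T₂ = (x₀, 0) ∧
    (∀ t : ℝ, 0 < t → t < T₁ → 0 < (γ₁ t).2) ∧
    (∀ t : ℝ, 0 < t → t < T₂ → (γ₂ t).2 < 0) := by
  intro X Y T₁ T₂ γ₁ γ₂
  have hb : 0 < β + x₀ := by linarith
  have ha : 0 < β - x₀ := by linarith
  have hratio : 1 < (β - x₀) / (β + x₀) := by
    rw [lt_div_iff₀ hb]; linarith
  have hT2 : 0 < T₂ := Real.log_pos hratio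
  have hexpT2 : Real.exp T₂ = (β - x₀) / (β + x₀) :=
    Real.exp_log (by positivity)
  refine ⟨by simp only [T₁]; linarith, hT2, ?_, ?_, ?_, ?_, ?_, ?_, ?_, ?_⟩
  · intro t
    have hx : HasDerivAt (fun t : ℝ => x₀ + t) 1 t :=
      (hasDerivAt_id t).const_add x₀
    have hy : HasDerivAt (fun t : ℝ => -x₀ * t - t ^ 2 / 2) (-(x₀ + t)) t := by
      have h1' : HasDerivAt (fun t : ℝ => -x₀ * t) (-x₀) t := by
        simpa using (hasDerivAt_id t).const_mul (-x₀)
      have h2' : HasDerivAt (fun t : ℝ => t ^ 2 / 2) (t) t := by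
        have := (hasDerivAt_pow 2 t).div_const 2
        simpa using this
      have := h1'.sub h2'
      exact this.congr_deriv (by ring)
    exact hx.prodMk hy
  · intro t
    have he : HasDerivAt (fun t : ℝ => Real.exp (-t)) (-Real.exp (-t)) t := by
      simpa using (hasDerivAt_neg t).exp
    have he' : HasDerivAt (fun t : ℝ => Real.exp t) (Real.exp t) t :=
      Real.hasDerivAt_exp t
    have hx : HasDerivAt
        (fun t : ℝ => ((β - x₀) * Real.exp (-t) - (β + x₀) * Real.exp t) / 2)
        ((-(β - x₀) * Real.exp (-t) - (β + x₀) * Real.exp t) / 2) t := by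
      have := ((he.const_mul (β - x₀)).sub (he'.const_mul (β + x₀))).div_const 2
      exact this.congr_deriv (by ring)
    have hy : HasDerivAt
        (fun t : ℝ => -β + ((β - x₀) * Real.exp (-t) + (β + x₀) * Real.exp t) / 2)
        ((-(β - x₀) * Real.exp (-t) + (β + x₀) * Real.exp t) / 2) t := by
      have := (((he.const_mul (β - x₀)).add (he'.const_mul (β + x₀))).div_const 2).const_add (-β)
      exact this.congr_deriv (by ring)
    have := hx.prodMk hy
    convert this using 2 <;> simp [Y, γ₂] <;> ring
  · simp [γ₁]
  · simp only [γ₁, T₁]; norm_num; constructor <;> ring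
  · simp only [γ₂]; norm_num; ring
  · have h2' : Real.exp (-T₂) = (β + x₀) / (β - x₀) := by
      rw [Real.exp_neg, hexpT2, inv_div]
    simp only [γ₂, hexpT2, h2']
    rw [Prod.ext_iff]
    constructor <;> (field_simp; try ring)
  · intro t ht hT
    simp only [γ₁]
    have : t < -2 * x₀ := hT
    nlinarith
  · intro t ht hT
    simp only [γ₂]
    have hu : 1 < Real.exp t := by simpa using Real.exp_lt_exp.mpr ht
    have hu2 : Real.exp t < (β - x₀) / (β + x₀) := by
      rw [← hexpT2]; exact Real.exp_lt_exp.mpr hT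
    have hbu : (β + x₀) * Real.exp t < β - x₀ := by
      rw [div_eq_mul_inv] at hu2
      calc (β + x₀) * Real.exp t < (β + x₀) * ((β - x₀) * (β + x₀)⁻¹) := by
            exact mul_lt_mul_of_pos_left hu2 hb
        _ = β - x₀ := by field_simp
    have hexp : Real.exp (-t) = (Real.exp t)⁻¹ := Real.exp_neg t
    rw [hexp]
    set u := Real.exp t with hudef
    have hupos : 0 < u := Real.exp_pos t
    have key : (β - x₀) * u⁻¹ + (β + x₀) * u < 2 * β := by
      rw [← sub_pos]
      have h0 : ((β + x₀) * u - (β - x₀)) * (u - 1) < 0 :=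
        mul_neg_of_neg_of_pos (by linarith) (by linarith)
      have : 2 * β - ((β - x₀) * u⁻¹ + (β + x₀) * u)
          = -(((β + x₀) * u - (β - x₀)) * (u - 1)) / u := by
        field_simp; ring
      rw [this]
      exact div_pos (by linarith) hupos
    linarith
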